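/- For the cluster algebra A(c,c) with c ≥ 2 and cluster variables x_n defined by x_{n+1} = (x_n^c + 1)/x_{n−1}, and the sequence a_1 = 0, a_2 = 1, a_n = c·a_{n-1} − a_{n-2}: for each n ≥ 3, x_n · x_1^{a_{n-1}} · x_2^{a_{n-2}} is a polynomial in x_1^c and x_2^c with integer coefficients. -/

import Mathlib

open MvPolynomial

lemma aux_prime_X0 : Prime (X 0 : MvPolynomial (Fin 2) ℤ) := by
  rw [← MulEquiv.prime_iff (MvPolynomial.finSuccEquiv ℤ 1).toMulEquiv]
  have : (MvPolynomial.finSuccEquiv ℤ 1).toMulEquiv (X 0) = Polynomial.X := by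
    simp [MvPolynomial.finSuccEquiv_X_zero]
  rw [this]
  exact Polynomial.prime_X

lemma aux_prime_X1 : Prime (X 1 : MvPolynomial (Fin 2) ℤ) := by
  rw [← MulEquiv.prime_iff (renameEquiv ℤ (Equiv.swap (0 : Fin 2) 1)).toMulEquiv]
  have : (renameEquiv ℤ (Equiv.swap (0 : Fin 2) 1)).toMulEquiv (X 1) = X 0 := by
    simp [renameEquiv_apply, rename_X]
  rw [this]
  exact aux_prime_X0

lemma aux_relprime {u : MvPolynomial (Fin 2) ℤ} (hu : constantCoeff u = 1) (i j : ℕ) :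
    IsRelPrime u (X 0 ^ i * X 1 ^ j) := by
  have hX : ∀ k : Fin 2, Prime (X k : MvPolynomial (Fin 2) ℤ) →
      IsRelPrime u (X k : MvPolynomial (Fin 2) ℤ) := by
    intro k hk d hdu hdX
    obtain ⟨e, he⟩ := hdX
    rcases hk.irreducible.isUnit_or_isUnit he with h | h
    · exact h
    · exfalso
      have hXd : (X k : MvPolynomial (Fin 2) ℤ) ∣ d := by
        rw [he]; exact (associated_mul_unit_left d e h).dvd
      obtain ⟨s, hs⟩ := hXd.trans hdu
      rw [hs] at hu
      simp [constantCoeff_X] at hu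
  exact ((hX 0 aux_prime_X0).pow_right).mul_right ((hX 1 aux_prime_X1).pow_right)

noncomputable abbrev FF := FractionRing (MvPolynomial (Fin 2) ℚ)

lemma aux_comp (c : ℕ) :
    ((IsScalarTower.toAlgHom ℤ (MvPolynomial (Fin 2) ℚ) FF).comp
      (aeval ![(X 0 : MvPolynomial (Fin 2) ℚ) ^ c, (X 1 : MvPolynomial (Fin 2) ℚ) ^ c] :
        MvPolynomial (Fin 2) ℤ →ₐ[ℤ] MvPolynomial (Fin 2) ℚ)) =
    aeval ![(algebraMap (MvPolynomial (Fin 2) ℚ) FF (X 0)) ^ c,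
            (algebraMap (MvPolynomial (Fin 2) ℚ) FF (X 1)) ^ c] := by
  apply MvPolynomial.algHom_ext
  intro i
  fin_cases i <;> simp

lemma aux_cc (c : ℕ) (hc : c ≠ 0) (p : MvPolynomial (Fin 2) ℤ) :
    constantCoeff (aeval ![(X 0 : MvPolynomial (Fin 2) ℚ) ^ c, (X 1 : MvPolynomial (Fin 2) ℚ) ^ c] p)
      = ((constantCoeff p : ℤ) : ℚ) := by
  have h : ((constantCoeff : MvPolynomial (Fin 2) ℚ →+* ℚ).comp
      (aeval ![(X 0 : MvPolynomial (Fin 2) ℚ) ^ c, (X 1 : MvPolynomial (Fin 2) ℚ) ^ c] :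
        MvPolynomial (Fin 2) ℤ →ₐ[ℤ] MvPolynomial (Fin 2) ℚ).toRingHom)
      = (Int.castRingHom ℚ).comp (constantCoeff : MvPolynomial (Fin 2) ℤ →+* ℤ) := by
    apply MvPolynomial.ringHom_ext
    · intro r; simp
    · intro i
      fin_cases i <;>
        simp [map_pow, constantCoeff_X, zero_pow hc]
  exact RingHom.congr_fun h p

lemma aux_ne_zero (c : ℕ) (hc : c ≠ 0) (p : MvPolynomial (Fin 2) ℤ)
    (hp : constantCoeff p = 1) :
    (aeval ![(algebraMap (MvPolynomial (Fin 2) ℚ) FF (X 0)) ^ c,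
            (algebraMap (MvPolynomial (Fin 2) ℚ) FF (X 1)) ^ c] p) ≠ 0 := by
  set q := aeval ![(X 0 : MvPolynomial (Fin 2) ℚ) ^ c, (X 1 : MvPolynomial (Fin 2) ℚ) ^ c] p with hq
  have h1 : (aeval ![(algebraMap (MvPolynomial (Fin 2) ℚ) FF (X 0)) ^ c,
            (algebraMap (MvPolynomial (Fin 2) ℚ) FF (X 1)) ^ c] p) = algebraMap _ FF q := by
    rw [← aux_comp c]; rfl
  rw [h1]
  have hqne : q ≠ 0 := by
    intro h0
    have := aux_cc c hc p
    rw [← hq, h0, map_zero, hp] at this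
    norm_num at this
  intro h0
  exact hqne (IsFractionRing.injective (MvPolynomial (Fin 2) ℚ) FF (by rw [h0, map_zero]))

lemma aux_field {F : Type*} [Field F] (x1 x2 y3 y4 y5 : F) (c : ℕ)
    (hx1 : x1 ≠ 0) (hx2 : x2 ≠ 0)
    (p q r s : ℤ) (h1 : s + q = c * r) (h2 : r + p = c * q)
    (h5 : y5 * y3 = y4 ^ c + 1) :
    (y3 * x1 ^ q * x2 ^ p) * (y5 * x1 ^ s * x2 ^ r)
      = (y4 * x1 ^ r * x2 ^ q) ^ c + x1 ^ ((c : ℤ) * r) * x2 ^ ((c : ℤ) * q) := by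
  have e1 : (y3 * x1 ^ q * x2 ^ p) * (y5 * x1 ^ s * x2 ^ r)
      = (y5 * y3) * x1 ^ (s + q) * x2 ^ (r + p) := by
    rw [zpow_add₀ hx1, zpow_add₀ hx2]; ring
  have e2 : (y4 * x1 ^ r * x2 ^ q) ^ c = y4 ^ c * x1 ^ (r * (c : ℤ)) * x2 ^ (q * (c : ℤ)) := by
    rw [mul_pow, mul_pow, ← zpow_natCast (x1 ^ r) c, ← zpow_natCast (x2 ^ q) c,
      ← zpow_mul, ← zpow_mul]
  rw [e1, e2, h5, h1, h2, mul_comm (c : ℤ) r, mul_comm (c : ℤ) q]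
  ring
lemma aux_step (c : ℕ) (hc0 : c ≠ 0) (t u v : MvPolynomial (Fin 2) ℤ) (i j k l : ℕ)
    (ccu : constantCoeff u = 1)
    (hv : u ^ c + X 0 ^ j * X 1 ^ k = t * v)
    (rel0 : u ∣ t ^ c + X 0 ^ k * X 1 ^ l)
    (hji : j * c = i + k) (hkj : k * c = j + l) :
    u ∣ v ^ c + X 0 ^ i * X 1 ^ j := by
  have hMc : (X 0 ^ j * X 1 ^ k : MvPolynomial (Fin 2) ℤ) ^ c
      = (X 0 ^ i * X 1 ^ j) * (X 0 ^ k * X 1 ^ l) := by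
    rw [mul_pow, ← pow_mul, ← pow_mul, hji, hkj, pow_add, pow_add]
    ring
  have htvc : ((t * v : MvPolynomial (Fin 2) ℤ)) ^ c
      = (u ^ c + X 0 ^ j * X 1 ^ k) ^ c := by rw [← hv]
  have hcomb : t ^ c * (v ^ c + X 0 ^ i * X 1 ^ j)
      = ((u ^ c + X 0 ^ j * X 1 ^ k) ^ c - (X 0 ^ j * X 1 ^ k) ^ c)
        + (X 0 ^ i * X 1 ^ j) * (t ^ c + X 0 ^ k * X 1 ^ l) := by
    linear_combination htvc + hMc
  have d1 : u ∣ (u ^ c + X 0 ^ j * X 1 ^ k) ^ c - (X 0 ^ j * X 1 ^ k) ^ c := by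
    refine (dvd_pow_self u hc0).trans ?_
    have := sub_dvd_pow_sub_pow (u ^ c + X 0 ^ j * X 1 ^ k) (X 0 ^ j * X 1 ^ k) c
    simpa using this
  have d2 : u ∣ (X 0 ^ i * X 1 ^ j) * (t ^ c + X 0 ^ k * X 1 ^ l) := rel0.mul_left _
  have hdvd : u ∣ t ^ c * (v ^ c + X 0 ^ i * X 1 ^ j) := by
    rw [hcomb]; exact dvd_add d1 d2
  have hut : IsRelPrime u t := by
    intro d hdu hdt
    have h1 : d ∣ u ^ c + X 0 ^ j * X 1 ^ k := by
      rw [hv]; exact hdt.mul_right v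
    have h2 : d ∣ u ^ c := dvd_pow hdu hc0
    have hdM : d ∣ X 0 ^ j * X 1 ^ k := by
      have := dvd_sub h1 h2
      simpa using this
    exact aux_relprime ccu _ _ hdu hdM
  exact (hut.pow_right).dvd_of_dvd_mul_left hdvd


theorem stmt_11 (c : ℕ) (hc : 2 ≤ c) (a : ℕ → ℤ) (ha1 : a 1 = 0) (ha2 : a 2 = 1)
    (harec : ∀ n : ℕ, 3 ≤ n → a n = (c : ℤ) * a (n - 1) - a (n - 2))
    (x : ℕ → FractionRing (MvPolynomial (Fin 2) ℚ))
    (hx1 : x 1 = algebraMap (MvPolynomial (Fin 2) ℚ) _ (X 0))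
    (hx2 : x 2 = algebraMap (MvPolynomial (Fin 2) ℚ) _ (X 1))
    (hrec : ∀ n : ℕ, 2 ≤ n → x (n + 1) = (x n ^ c + 1) / x (n - 1)) :
    ∀ n : ℕ, 3 ≤ n → ∃ P : MvPolynomial (Fin 2) ℤ,
      x n * x 1 ^ (a (n - 1)) * x 2 ^ (a (n - 2)) = MvPolynomial.aeval ![x 1 ^ c, x 2 ^ c] P := by
  have hc0 : c ≠ 0 := by omega
  -- nonvanishing of x 1, x 2
  have hinj := IsFractionRing.injective (MvPolynomial (Fin 2) ℚ)
      (FractionRing (MvPolynomial (Fin 2) ℚ))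
  have hx1ne : x 1 ≠ 0 := by
    rw [hx1]; intro h
    exact MvPolynomial.X_ne_zero 0 (hinj (by rw [h, map_zero]))
  have hx2ne : x 2 ≠ 0 := by
    rw [hx2]; intro h
    exact MvPolynomial.X_ne_zero 1 (hinj (by rw [h, map_zero]))
  -- nonvanishing of aeval images
  have hNE : ∀ p : MvPolynomial (Fin 2) ℤ, constantCoeff p = 1 →
      MvPolynomial.aeval ![x 1 ^ c, x 2 ^ c] p ≠ 0 := by
    intro p hp
    rw [hx1, hx2]
    exact aux_ne_zero c hc0 p hp
  -- sequence facts
  have hmono : ∀ n : ℕ, 1 ≤ n → 0 ≤ a n ∧ a n ≤ a (n + 1) := by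
    intro n hn
    induction n with
    | zero => omega
    | succ m ih =>
      by_cases hm : m = 0
      · subst hm
        rw [show (0:ℕ)+1 = 1 from rfl]
        rw [ha1, show (1:ℕ)+1 = 2 from rfl, ha2]
        norm_num
      · have hm1 : 1 ≤ m := by omega
        obtain ⟨h0, h1⟩ := ih hm1
        have hr := harec (m + 2) (by omega)
        rw [show m+2-1 = m+1 from by omega, show m+2-2 = m from by omega] at hr
        have hc' : (2 : ℤ) ≤ (c : ℤ) := by exact_mod_cast hc
        have h0' : 0 ≤ a (m+1) := le_trans h0 h1
        constructor
        · exact h0'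
        · rw [show m+1+1 = m+2 from by omega, hr]
          nlinarith
  have hnn : ∀ n : ℕ, 1 ≤ n → 0 ≤ a n := fun n hn => (hmono n hn).1
  have hpos : ∀ n : ℕ, 2 ≤ n → 1 ≤ a n := by
    intro n hn
    induction n with
    | zero => omega
    | succ m ih =>
      by_cases hm : m = 1
      · subst hm; rw [show (1:ℕ)+1 = 2 from rfl, ha2]
      · have hm2 : 2 ≤ m := by omega
        exact le_trans (ih hm2) (hmono m (by omega)).2
  set b : ℕ → ℕ := fun n => (a n).toNat with hbdef
  have hbcast : ∀ n : ℕ, 1 ≤ n → (b n : ℤ) = a n := by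
    intro n hn; simp [hbdef, Int.toNat_of_nonneg (hnn n hn)]
  have hbpos : ∀ n : ℕ, 2 ≤ n → 1 ≤ b n := by
    intro n hn
    have := hpos n hn
    have := hbcast n (by omega)
    omega
  have hb1 : b 1 = 0 := by simp [hbdef, ha1]
  have hb2 : b 2 = 1 := by simp [hbdef, ha2]
  -- constant coefficient of monomials
  have hM0 : ∀ i j : ℕ, 1 ≤ i →
      constantCoeff ((X 0 : MvPolynomial (Fin 2) ℤ) ^ i * X 1 ^ j) = 0 := by
    intro i j hi
    rw [map_mul, map_pow, constantCoeff_X, zero_pow (by omega : i ≠ 0), zero_mul]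
  -- recurrences
  have hA : ∀ n : ℕ, 3 ≤ n → a n + a (n - 2) = (c : ℤ) * a (n - 1) := by
    intro n hn; have := harec n hn; omega
  have hbA : ∀ n : ℕ, 3 ≤ n → b (n - 1) * c = b n + b (n - 2) := by
    intro n hn
    have h1 := hbcast n (by omega)
    have h2 := hbcast (n - 1) (by omega)
    have h3 := hbcast (n - 2) (by omega)
    have h4 := hA n hn
    have : ((b (n-1) * c : ℕ) : ℤ) = ((b n + b (n-2) : ℕ) : ℤ) := by
      push_cast
      rw [h1, h2, h3]
      linarith
    exact_mod_cast this
  -- the main induction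
  have key : ∀ k : ℕ, ∃ t u : MvPolynomial (Fin 2) ℤ,
      MvPolynomial.aeval ![x 1 ^ c, x 2 ^ c] t = x (k+3) * x 1 ^ a (k+2) * x 2 ^ a (k+1) ∧
      MvPolynomial.aeval ![x 1 ^ c, x 2 ^ c] u = x (k+4) * x 1 ^ a (k+3) * x 2 ^ a (k+2) ∧
      constantCoeff t = 1 ∧ constantCoeff u = 1 ∧
      u ∣ t ^ c + X 0 ^ (b (k+2)) * X 1 ^ (b (k+1)) ∧
      t ∣ u ^ c + X 0 ^ (k+3 |> b) * X 1 ^ (b (k+2)) := by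
    intro k
    induction k with
    | zero =>
      have ha3 : a 3 = (c : ℤ) := by
        have := harec 3 (by norm_num)
        norm_num [ha1, ha2] at this
        exact this
      have hb3 : b 3 = c := by
        have := hbcast 3 (by norm_num)
        omega
      have h3 : x 3 * x 1 = x 2 ^ c + 1 := by
        have h := hrec 2 (by norm_num)
        norm_num at h
        rw [h, div_mul_cancel₀ _ hx1ne]
      have h4 : x 4 = (x 3 ^ c + 1) / x 2 := by
        have h := hrec 3 (by norm_num)
        norm_num at h
        exact h
      refine ⟨X 1 + 1, (X 1 + 1) ^ c + X 0, ?_, ?_, ?_, ?_, ?_, ?_⟩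
      · simp only [map_add, map_one, aeval_X, Matrix.cons_val_one, Matrix.head_cons]
        norm_num [ha1, ha2]
        rw [h3]
      · simp only [map_add, map_pow, map_one, aeval_X, Matrix.cons_val_one, Matrix.head_cons,
          Matrix.cons_val_zero]
        norm_num [ha2, ha3, zpow_natCast]
        rw [h4]
        have e2 : x 3 ^ c * x 1 ^ c = (x 2 ^ c + 1) ^ c := by rw [← mul_pow, h3]
        rw [div_mul_eq_mul_div, div_mul_eq_mul_div, eq_div_iff hx2ne]
        linear_combination (-(x 2)) * e2
      · simp
      · simp
      · norm_num [hb1, hb2]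
      · norm_num [hb2, hb3]
        have d0 : ((X 1 + 1 : MvPolynomial (Fin 2) ℤ)) ^ c ∣
            (((X 1 + 1) ^ c + X 0) ^ c - X 0 ^ c) := by
          have := sub_dvd_pow_sub_pow ((X 1 + 1 : MvPolynomial (Fin 2) ℤ) ^ c + X 0) (X 0) c
          simpa using this
        have d1 : (X 1 + 1 : MvPolynomial (Fin 2) ℤ) ∣
            (((X 1 + 1) ^ c + X 0) ^ c - X 0 ^ c) := (dvd_pow_self _ hc0).trans d0
        have d2 : (X 1 + 1 : MvPolynomial (Fin 2) ℤ) ∣ X 0 ^ c * (X 1 + 1) := dvd_mul_left _ _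
        have e : (((X 1 + 1 : MvPolynomial (Fin 2) ℤ)) ^ c + X 0) ^ c + X 0 ^ c * X 1
            = ((((X 1 + 1) ^ c + X 0) ^ c - X 0 ^ c)) + X 0 ^ c * (X 1 + 1) := by ring
        rw [e]
        exact dvd_add d1 d2
    | succ m ih =>
      obtain ⟨t, u, ht, hu, cct, ccu, rel0, rel1⟩ := ih
      simp only [show m+1+1 = m+2 from by omega, show m+1+2 = m+3 from by omega,
        show m+1+3 = m+4 from by omega, show m+1+4 = m+5 from by omega]
      obtain ⟨v, hv⟩ := rel1
      have hvM : u ^ c + X 0 ^ (b (m+3)) * X 1 ^ (b (m+2)) = t * v := hv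
      have ccv : constantCoeff v = 1 := by
        have h := congrArg constantCoeff hvM
        rw [map_add, map_pow, ccu, one_pow, hM0 _ _ (hbpos (m+3) (by omega)), map_mul, cct,
          one_mul, add_zero] at h
        exact h.symm
      have hxk3ne : x (m+3) ≠ 0 := by
        intro h0
        apply hNE t cct
        rw [ht, h0, zero_mul, zero_mul]
      have h5 : x (m+5) * x (m+3) = x (m+4) ^ c + 1 := by
        have h := hrec (m+4) (by omega)
        rw [show m+4+1 = m+5 from by omega, show m+4-1 = m+3 from by omega] at h
        rw [h, div_mul_cancel₀ _ hxk3ne]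
      have hAm4 := hA (m+4) (by omega)
      rw [show m+4-2 = m+2 from by omega, show m+4-1 = m+3 from by omega] at hAm4
      have hAm3 := hA (m+3) (by omega)
      rw [show m+3-2 = m+1 from by omega, show m+3-1 = m+2 from by omega] at hAm3
      -- the field identity
      have E := aux_field (x 1) (x 2) (x (m+3)) (x (m+4)) (x (m+5)) c hx1ne hx2ne
        (a (m+1)) (a (m+2)) (a (m+3)) (a (m+4)) hAm4 hAm3 h5
      -- aeval of the relation
      have hφ : MvPolynomial.aeval ![x 1 ^ c, x 2 ^ c] t *
          MvPolynomial.aeval ![x 1 ^ c, x 2 ^ c] v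
          = (MvPolynomial.aeval ![x 1 ^ c, x 2 ^ c] u) ^ c
            + (x 1 ^ c) ^ (b (m+3)) * (x 2 ^ c) ^ (b (m+2)) := by
        rw [← map_mul, ← hvM]
        simp [map_add, map_pow, map_mul, aeval_X]
      have hMzpow : (x 1 ^ c) ^ (b (m+3)) * (x 2 ^ c) ^ (b (m+2))
          = x 1 ^ ((c:ℤ) * a (m+3)) * x 2 ^ ((c:ℤ) * a (m+2)) := by
        rw [← pow_mul, ← pow_mul, ← zpow_natCast (x 1) (c * b (m+3)),
          ← zpow_natCast (x 2) (c * b (m+2))]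
        congr 1
        · congr 1
          push_cast
          rw [hbcast (m+3) (by omega)]
        · congr 1
          push_cast
          rw [hbcast (m+2) (by omega)]
      have hφv : MvPolynomial.aeval ![x 1 ^ c, x 2 ^ c] v
          = x (m+5) * x 1 ^ a (m+4) * x 2 ^ a (m+3) := by
        have htne : MvPolynomial.aeval ![x 1 ^ c, x 2 ^ c] t ≠ 0 := hNE t cct
        apply mul_left_cancel₀ htne
        rw [hφ, hMzpow, hu, ht, E]
      -- new divisibility
      have hbAm4 := hbA (m+4) (by omega)
      rw [show m+4-2 = m+2 from by omega, show m+4-1 = m+3 from by omega] at hbAm4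
      have hbAm3 := hbA (m+3) (by omega)
      rw [show m+3-2 = m+1 from by omega, show m+3-1 = m+2 from by omega] at hbAm3
      have rel1' : u ∣ v ^ c + X 0 ^ (b (m+4)) * X 1 ^ (b (m+3)) :=
        aux_step c hc0 t u v (b (m+4)) (b (m+3)) (b (m+2)) (b (m+1)) ccu hvM rel0 hbAm4 hbAm3
      refine ⟨u, v, hu, hφv, ccu, ccv, ?_, rel1'⟩
      exact ⟨t, by rw [hvM, mul_comm]⟩
  -- conclusion
  intro n hn
  by_cases h3 : n = 3
  · subst h3
    obtain ⟨t, u, ht, _, _, _, _, _⟩ := key 0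
    exact ⟨t, by norm_num at ht ⊢; exact ht.symm⟩
  · have h4 : 4 ≤ n := by omega
    obtain ⟨t, u, _, hu, _, _, _, _⟩ := key (n - 4)
    rw [show n-4+4 = n from by omega, show n-4+3 = n-1 from by omega,
      show n-4+2 = n-2 from by omega] at hu
    exact ⟨u, hu.symm⟩
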